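/- Let t0 < T, θ ∈ (0,1), 0 < μ < 1, γ > 0, b > 0, and let η : [t0,T] → ℝ be continuous. Then the function t ↦ (I^{θ,μ,γ}η)(t) is well defined (the series converges for every t ∈ [t0,T]), is continuous on [t0,T], and satisfies (I^{θ,μ,γ}η)(t0) = 0. Consequently, any continuous solution of x(t) = x0 + (I^{θ,μ,γ}(f(·,x(·))))(t) automatically satisfies the initial condition x(t0) = x0 when μ ≠ 1. -/

import Mathlib

open Real MeasureTheory Set

/-- Generalized binomial coefficient `C(γ, i) = γ(γ-1)⋯(γ-i+1)/i!`. -/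
noncomputable def genBinom (γ : ℝ) (i : ℕ) : ℝ :=
  (∏ j ∈ Finset.range i, (γ - j)) / (Nat.factorial i : ℝ)

/-- Rising factorial `(ρ)_k = ρ(ρ+1)⋯(ρ+k-1)`. -/
noncomputable def risingFac (ρ : ℝ) (k : ℕ) : ℝ :=
  ∏ j ∈ Finset.range k, (ρ + j)

/-- Generalized Mittag-Leffler function `E_{θ,β}^ρ(λ, z)`
(terms with `Γ` at a pole vanish since `Real.Gamma` is `0` there). -/
noncomputable def mittagLeffler (θ β ρ lam z : ℝ) : ℝ :=
  ∑' k : ℕ, lam ^ k * z ^ ((k : ℝ) * θ + β - 1) * risingFac ρ k /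
    (Real.Gamma ((k : ℝ) * θ + β) * (Nat.factorial k : ℝ))

/-- Generalized AB fractional integral `(I^{θ,μ,γ} η)(t)` starting at `t0`,
with normalization constant `b = B(θ) > 0`. -/
noncomputable def ABIntegral (t0 b θ μ γ : ℝ) (η : ℝ → ℝ) (t : ℝ) : ℝ :=
  ∑' i : ℕ, genBinom γ i * θ ^ i /
      (b * (1 - θ) ^ ((i : ℝ) - 1) * Real.Gamma ((i : ℝ) * θ + 1 - μ)) *
    ∫ s in t0..t, (t - s) ^ ((i : ℝ) * θ - μ) * η s

/-- Generalized ABC fractional derivative `(D^{θ,μ,γ} f)(t)` starting at `t0`,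
with `λ = -θ/(1-θ)` and normalization constant `b = B(θ) > 0`. -/
noncomputable def ABCDeriv (t0 b θ μ γ : ℝ) (f : ℝ → ℝ) (t : ℝ) : ℝ :=
  (b / (1 - θ)) * ∫ s in t0..t, mittagLeffler θ μ γ (-θ / (1 - θ)) (t - s) * deriv f s

/-- Generalized ABR fractional derivative `(R^{θ,μ,γ} f)(t)` starting at `t0`. -/
noncomputable def ABRDeriv (t0 b θ μ γ : ℝ) (f : ℝ → ℝ) (t : ℝ) : ℝ :=
  (b / (1 - θ)) *
    deriv (fun u => ∫ s in t0..u, mittagLeffler θ μ γ (-θ / (1 - θ)) (u - s) * f s) t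

/-- The contraction constant `C1(T, A)` (case `μ ≠ 1`). -/
noncomputable def C1const (t0 T b θ μ γ A : ℝ) : ℝ :=
  (A / b) * ∑' i : ℕ, |genBinom γ i| * θ ^ i * (T - t0) ^ ((i : ℝ) * θ + 1 - μ) /
    ((1 - θ) ^ ((i : ℝ) - 1) * Real.Gamma ((i : ℝ) * θ + 2 - μ))

/-- The contraction constant `C2(T, A)` (case `μ = 1`). -/
noncomputable def C2const (t0 T b θ γ A : ℝ) : ℝ :=
  (A / b) * ((1 - θ) +
    ∑' i : ℕ, |genBinom γ (i + 1)| * θ ^ (i + 1) * (T - t0) ^ (((i : ℝ) + 1) * θ) /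
      ((1 - θ) ^ (i : ℕ) * Real.Gamma (((i : ℝ) + 1) * θ + 1)))

/-- The operator `Υ` in the case `μ = 1`, whose `i = 0` term reduces to `((1-θ)/b) f(t, x(t))`. -/
noncomputable def UpsilonMuOne (t0 b θ γ x0 : ℝ) (f : ℝ → ℝ → ℝ) (x : ℝ → ℝ) (t : ℝ) : ℝ :=
  x0 + ((1 - θ) / b) * f t (x t) +
    ∑' i : ℕ, genBinom γ (i + 1) * θ ^ (i + 1) /
        (b * (1 - θ) ^ (i : ℕ) * Real.Gamma (((i : ℝ) + 1) * θ)) *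
      ∫ s in t0..t, (t - s) ^ (((i : ℝ) + 1) * θ - 1) * f s (x s)

open Filter

open Filter in

lemma myGamma_shift {y : ℝ} (hy : 0 < y) (n : ℕ) :
    Real.Gamma (y + n) = (∏ k ∈ Finset.range n, (y + k)) * Real.Gamma y := by
  induction n with
  | zero => simp
  | succ n ih =>
    have h1 : y + ((n : ℕ) + 1 : ℕ) = (y + n) + 1 := by push_cast; ring
    have h2 : (0:ℝ) < y + n := by positivity
    rw [h1, Real.Gamma_add_one h2.ne', ih, Finset.prod_range_succ]
    push_cast; ring

lemma myGamma_lower : ∃ c > (0:ℝ), ∀ y ∈ Set.Icc (1:ℝ) 3, c ≤ Real.Gamma y := by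
  have hc : ContinuousOn Real.Gamma (Set.Icc (1:ℝ) 3) := by
    intro y hy
    have hd : DifferentiableAt ℝ Real.Gamma y := by
      apply Real.differentiableAt_Gamma
      intro m h
      have h1 : (1:ℝ) ≤ y := hy.1
      have h2 : (0:ℝ) ≤ (m:ℝ) := Nat.cast_nonneg m
      rw [h] at h1; linarith
    exact hd.continuousAt.continuousWithinAt
  obtain ⟨y0, hy0, hmin⟩ := (isCompact_Icc (a := (1:ℝ)) (b := 3)).exists_isMinOn
    ⟨1, by norm_num⟩ hc
  exact ⟨Real.Gamma y0, Real.Gamma_pos_of_pos (by linarith [hy0.1]),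
    fun y hy => hmin hy⟩

lemma prod_range_cast_add_one (n : ℕ) :
    (∏ k ∈ Finset.range n, ((k : ℝ) + 1)) = (n.factorial : ℝ) := by
  induction n with
  | zero => simp
  | succ n ih => rw [Finset.prod_range_succ, ih, Nat.factorial_succ]; push_cast; ring

lemma myGamma_factorial_lower {θ δ : ℝ} (hθ : 0 < θ) (hδ1 : 1 ≤ δ) (hδ2 : δ ≤ 2)
    {c : ℝ} (hcle : ∀ y ∈ Set.Icc (1:ℝ) 3, c ≤ Real.Gamma y) (i : ℕ) :
    c * ((Nat.floor ((i:ℝ) * θ)).factorial : ℝ) ≤ Real.Gamma ((i:ℝ) * θ + δ) := by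
  set x : ℝ := (i:ℝ) * θ with hx
  have hx0 : 0 ≤ x := by positivity
  set n : ℕ := Nat.floor x with hn
  have hfl : (n:ℝ) ≤ x := Nat.floor_le hx0
  have hfu : x < n + 1 := Nat.lt_floor_add_one x
  set y : ℝ := x - n + δ with hy
  have hy1 : 1 ≤ y := by simp only [hy]; linarith
  have hy3 : y ≤ 3 := by simp only [hy]; linarith
  have hyn : y + n = x + δ := by ring
  rw [← hyn, myGamma_shift (by linarith) n]
  have h1 : (n.factorial : ℝ) ≤ ∏ k ∈ Finset.range n, (y + k) := by
    rw [← prod_range_cast_add_one]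
    apply Finset.prod_le_prod
    · intro k _; positivity
    · intro k _; linarith
  have hcg : c ≤ Real.Gamma y := hcle y ⟨hy1, hy3⟩
  have hcnn : 0 ≤ Real.Gamma y := le_of_lt (Real.Gamma_pos_of_pos (by linarith))
  calc c * (n.factorial : ℝ) ≤ Real.Gamma y * (n.factorial : ℝ) :=
        mul_le_mul_of_nonneg_right hcg (by positivity)
    _ ≤ Real.Gamma y * ∏ k ∈ Finset.range n, (y + k) := mul_le_mul_of_nonneg_left h1 hcnn
    _ = (∏ k ∈ Finset.range n, (y + k)) * Real.Gamma y := by ring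

lemma summable_pow_div_gamma (r θ δ : ℝ) (hr : 0 ≤ r) (hθ : 0 < θ)
    (hδ1 : 1 ≤ δ) (hδ2 : δ ≤ 2) :
    Summable (fun i : ℕ => r ^ i / Real.Gamma ((i:ℝ) * θ + δ)) := by
  obtain ⟨c, hc, hcle⟩ := myGamma_lower
  set s : ℝ := 2 * max r 1 with hs
  have hs2 : 2 ≤ s := by
    have : (1:ℝ) ≤ max r 1 := le_max_right r 1
    simp only [hs]; linarith
  set X : ℝ := s ^ (2 / θ) with hX
  have hX1 : 1 < X := by
    rw [hX, Real.one_lt_rpow_iff_of_pos (by linarith)]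
    left; exact ⟨by linarith, by positivity⟩
  have hX0 : 0 < X := by linarith
  have h0 : Tendsto (fun n : ℕ => X ^ n / (n.factorial : ℝ)) atTop (nhds 0) :=
    (Real.summable_pow_div_factorial X).tendsto_atTop_zero
  have h1 : ∀ᶠ n : ℕ in atTop, X ^ n / (n.factorial : ℝ) ≤ 1 :=
    h0.eventually (eventually_le_nhds (by norm_num))
  obtain ⟨N, hN⟩ := eventually_atTop.1 h1
  have hNfac : ∀ n, N ≤ n → X ^ n ≤ (n.factorial : ℝ) := by
    intro n hn
    have h2 := hN n hn
    have hf : (0:ℝ) < (n.factorial : ℝ) := by positivity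
    rw [div_le_one hf] at h2; exact h2
  apply summable_of_isBigO_nat (summable_geometric_of_lt_one
    (by norm_num : (0:ℝ) ≤ 1/2) (by norm_num))
  rw [Asymptotics.isBigO_iff]
  refine ⟨X / c, ?_⟩
  rw [eventually_atTop]
  refine ⟨Nat.ceil (((N:ℝ) + 1) / θ), ?_⟩
  intro i hi
  have hiθ : (N:ℝ) + 1 ≤ (i:ℝ) * θ := by
    have h2 : ((N:ℝ) + 1) / θ ≤ (i:ℝ) := le_trans (Nat.le_ceil _) (Nat.cast_le.2 hi)
    rw [div_le_iff₀ hθ] at h2; linarith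
  set n : ℕ := Nat.floor ((i:ℝ) * θ) with hn
  have hnN : N ≤ n := by
    apply Nat.le_floor; linarith
  have hgam : c * ((n.factorial : ℝ)) ≤ Real.Gamma ((i:ℝ) * θ + δ) :=
    myGamma_factorial_lower hθ hδ1 hδ2 hcle i
  have hfacX : X ^ n ≤ (n.factorial : ℝ) := hNfac n hnN
  have hnx : (i:ℝ) * θ - 1 ≤ (n:ℝ) := by
    have h3 := Nat.lt_floor_add_one ((i:ℝ) * θ)
    rw [← hn] at h3; linarith
  have hXpow : X ^ ((i:ℝ) * θ - 1) ≤ X ^ (n:ℕ) := by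
    rw [← Real.rpow_natCast X n]
    exact (Real.rpow_le_rpow_left_iff hX1).2 hnx
  have hXθ : X ^ θ = s * s := by
    rw [hX, ← Real.rpow_mul (by linarith : (0:ℝ) ≤ s)]
    have h4 : 2 / θ * θ = 2 := by field_simp
    rw [h4, Real.rpow_two]
    ring
  have hXsi : X ^ ((i:ℝ) * θ - 1) = (s * s) ^ i / X := by
    rw [Real.rpow_sub hX0, Real.rpow_one]
    congr 1
    rw [mul_comm ((i:ℝ)) θ, Real.rpow_mul (by linarith : (0:ℝ) ≤ X), Real.rpow_natCast, hXθ]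
  have hkey : c * ((s * s) ^ i / X) ≤ Real.Gamma ((i:ℝ) * θ + δ) := by
    calc c * ((s * s) ^ i / X) = c * X ^ ((i:ℝ) * θ - 1) := by rw [hXsi]
      _ ≤ c * X ^ (n:ℕ) := mul_le_mul_of_nonneg_left hXpow hc.le
      _ ≤ c * (n.factorial : ℝ) := mul_le_mul_of_nonneg_left hfacX hc.le
      _ ≤ _ := hgam
  have hgampos : 0 < Real.Gamma ((i:ℝ) * θ + δ) := Real.Gamma_pos_of_pos (by positivity)
  have hdpos : 0 < c * ((s * s) ^ i / X) := by positivity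
  have hstep1 : r ^ i / Real.Gamma ((i:ℝ) * θ + δ) ≤ r ^ i / (c * ((s * s) ^ i / X)) := by
    gcongr
  have hstep2 : r ^ i / (c * ((s * s) ^ i / X)) = (X / c) * (r / (s * s)) ^ i := by
    rw [div_pow]
    field_simp
  have hstep3 : (r / (s * s)) ^ i ≤ (1/2 : ℝ) ^ i := by
    apply pow_le_pow_left₀ (by positivity)
    rw [div_le_div_iff₀ (by positivity) (by norm_num)]
    have : r ≤ max r 1 := le_max_left r 1
    nlinarith
  have hnn : (0:ℝ) ≤ r ^ i / Real.Gamma ((i:ℝ) * θ + δ) := by positivity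
  rw [Real.norm_eq_abs, Real.norm_eq_abs, abs_of_nonneg hnn,
    abs_of_nonneg (by positivity : (0:ℝ) ≤ (1/2:ℝ) ^ i)]
  calc r ^ i / Real.Gamma ((i:ℝ) * θ + δ) ≤ r ^ i / (c * ((s * s) ^ i / X)) := hstep1
    _ = (X / c) * (r / (s * s)) ^ i := hstep2
    _ ≤ (X / c) * (1/2:ℝ) ^ i := mul_le_mul_of_nonneg_left hstep3 (by positivity)
    _ = X / c * (1/2:ℝ) ^ i := rfl

lemma repr_integral (t0 : ℝ) (α : ℝ) (g : ℝ → ℝ) (t : ℝ) :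
    (∫ s in t0..t, (t - s) ^ α * g s) = ∫ u in (0:ℝ)..(t - t0), u ^ α * g (t - u) := by
  have h := intervalIntegral.integral_comp_sub_left (a := t0) (b := t)
    (fun u => u ^ α * g (t - u)) t
  simp only [sub_self, sub_sub_cancel] at h
  exact h

lemma integrable_aux {α : ℝ} (hα : -1 < α) (g : ℝ → ℝ) (hg : Continuous g) (t c : ℝ) :
    IntervalIntegrable (fun u => u ^ α * g (t - u)) volume 0 c :=
  (intervalIntegral.intervalIntegrable_rpow' hα).mul_continuousOn
    ((hg.comp (continuous_const.sub continuous_id)).continuousOn)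

lemma integral_bound (t0 T : ℝ) {α M : ℝ} (hα : -1 < α) (g : ℝ → ℝ) (hg : Continuous g)
    (hM : ∀ s, |g s| ≤ M) {t : ℝ} (ht : t ∈ Set.Icc t0 T) :
    |∫ s in t0..t, (t - s) ^ α * g s| ≤ M * (T - t0) ^ (α + 1) / (α + 1) := by
  obtain ⟨ht0, htT⟩ := ht
  have hα1 : 0 < α + 1 := by linarith
  have hM0 : 0 ≤ M := le_trans (abs_nonneg _) (hM t0)
  have hc0 : (0:ℝ) ≤ t - t0 := by linarith
  rw [repr_integral t0 α g t]
  have hint1 : IntervalIntegrable (fun u => |u ^ α * g (t - u)|) volume 0 (t - t0) :=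
    (integrable_aux hα g hg t (t - t0)).abs
  have hint2 : IntervalIntegrable (fun u : ℝ => u ^ α * M) volume 0 (t - t0) :=
    (intervalIntegral.intervalIntegrable_rpow' hα).mul_const M
  calc |∫ u in (0:ℝ)..(t - t0), u ^ α * g (t - u)|
      ≤ ∫ u in (0:ℝ)..(t - t0), |u ^ α * g (t - u)| :=
        intervalIntegral.abs_integral_le_integral_abs hc0
    _ ≤ ∫ u in (0:ℝ)..(t - t0), u ^ α * M := by
        apply intervalIntegral.integral_mono_on hc0 hint1 hint2
        intro u hu
        rw [abs_mul, abs_of_nonneg (Real.rpow_nonneg hu.1 α)]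
        exact mul_le_mul_of_nonneg_left (hM _) (Real.rpow_nonneg hu.1 α)
    _ = (t - t0) ^ (α + 1) / (α + 1) * M := by
        rw [intervalIntegral.integral_mul_const, integral_rpow (Or.inl hα),
          Real.zero_rpow hα1.ne']
        ring
    _ ≤ M * (T - t0) ^ (α + 1) / (α + 1) := by
        rw [div_mul_eq_mul_div, mul_comm]
        gcongr
        all_goals linarith

lemma meas_aux {α : ℝ} (g : ℝ → ℝ) (hg : Continuous g) (t : ℝ) :
    Measurable (fun u : ℝ => u ^ α * g (t - u)) := by
  apply Measurable.mul ?_ ((hg.comp (continuous_const.sub continuous_id)).measurable)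
  apply measurable_of_continuousOn_compl_singleton (0:ℝ)
  exact continuousOn_of_forall_continuousAt fun x hx =>
    Real.continuousAt_rpow_const x α (Or.inl hx)

lemma cont_aux (t0 T : ℝ) (htT : t0 ≤ T) {α M : ℝ} (hα : -1 < α) (g : ℝ → ℝ)
    (hg : Continuous g) (hM : ∀ s, |g s| ≤ M) :
    ContinuousOn (fun t => ∫ s in t0..t, (t - s) ^ α * g s) (Set.Icc t0 T) := by
  have hM0 : 0 ≤ M := le_trans (abs_nonneg _) (hM t0)
  set H : ℝ → ℝ := fun t => ∫ u in Set.Ioc (0:ℝ) (T - t0),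
    Set.indicator (Set.Ioc (0:ℝ) (t - t0)) (fun u => u ^ α * g (t - u)) u with hH
  have key : ∀ t ∈ Set.Icc t0 T, (∫ s in t0..t, (t - s) ^ α * g s) = H t := by
    rintro t ⟨ht0, htT'⟩
    simp only [hH]
    rw [repr_integral t0 α g t, intervalIntegral.integral_of_le (by linarith),
      MeasureTheory.setIntegral_indicator measurableSet_Ioc,
      Set.inter_eq_self_of_subset_right (Set.Ioc_subset_Ioc_right (by linarith))]
  apply ContinuousOn.congr ?_ key
  intro t1 ht1
  apply MeasureTheory.continuousWithinAt_of_dominated (bound := fun u => u ^ α * M)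
  · filter_upwards with t
    exact ((meas_aux g hg t).indicator measurableSet_Ioc).aestronglyMeasurable
  · filter_upwards with t
    rw [MeasureTheory.ae_restrict_iff' measurableSet_Ioc]
    filter_upwards with u hu
    by_cases h : u ∈ Set.Ioc (0:ℝ) (t - t0)
    · rw [Set.indicator_of_mem h, Real.norm_eq_abs, abs_mul,
        abs_of_nonneg (Real.rpow_nonneg hu.1.le α)]
      exact mul_le_mul_of_nonneg_left (hM _) (Real.rpow_nonneg hu.1.le α)
    · rw [Set.indicator_of_notMem h, norm_zero]
      exact mul_nonneg (Real.rpow_nonneg hu.1.le α) hM0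
  · exact ((intervalIntegral.intervalIntegrable_rpow' hα).mul_const M).1
  · have hne : ∀ᵐ u ∂(volume.restrict (Set.Ioc (0:ℝ) (T - t0))), u ≠ t1 - t0 := by
      apply MeasureTheory.ae_restrict_of_ae
      rw [MeasureTheory.ae_iff]
      have : {u : ℝ | ¬ u ≠ t1 - t0} = {t1 - t0} := by ext u; simp
      rw [this]
      exact Real.volume_singleton
    filter_upwards [hne, MeasureTheory.ae_restrict_mem measurableSet_Ioc] with u hu hu2
    apply ContinuousAt.continuousWithinAt
    rcases lt_or_gt_of_ne hu with h | h
    · have hev : ∀ᶠ t in nhds t1, u < t - t0 := by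
        have : ∀ᶠ t in nhds t1, u + t0 < t := eventually_gt_nhds (by linarith)
        filter_upwards [this] with t ht; linarith
      have hcg : ContinuousAt (fun t => u ^ α * g (t - u)) t1 :=
        (continuous_const.mul (hg.comp (continuous_id.sub continuous_const))).continuousAt
      apply hcg.congr
      filter_upwards [hev] with t ht
      rw [Set.indicator_of_mem (show u ∈ Set.Ioc (0:ℝ) (t - t0) from ⟨hu2.1, by linarith⟩)]
    · have hev : ∀ᶠ t in nhds t1, t - t0 < u := by
        have : ∀ᶠ t in nhds t1, t < u + t0 := eventually_lt_nhds (by linarith)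
        filter_upwards [this] with t ht; linarith
      apply continuousAt_const.congr
      filter_upwards [hev] with t ht
      rw [Set.indicator_of_notMem]
      intro hmem; exact absurd hmem.2 (by linarith)

lemma genBinom_le (γ : ℝ) (hγ : 0 < γ) (i : ℕ) : |genBinom γ i| ≤ (1 + γ) ^ i := by
  rw [genBinom, abs_div, abs_of_nonneg (by positivity : (0:ℝ) ≤ (i.factorial : ℝ)),
    Finset.abs_prod, div_le_iff₀ (by positivity)]
  calc (∏ j ∈ Finset.range i, |γ - (j:ℝ)|)
      ≤ ∏ j ∈ Finset.range i, (1 + γ) * ((j:ℝ) + 1) := by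
        apply Finset.prod_le_prod (fun j _ => abs_nonneg _)
        intro j _
        rw [abs_le]
        have hj : (0:ℝ) ≤ (j:ℝ) := Nat.cast_nonneg j
        constructor <;> nlinarith
    _ = (1 + γ) ^ i * (i.factorial : ℝ) := by
        rw [Finset.prod_mul_distrib, Finset.prod_const, Finset.card_range,
          prod_range_cast_add_one]

/-- The generalized AB integral is well defined, continuous and
vanishes at `t0`; consequently continuous solutions of the integral equation satisfy
the initial condition when `μ ≠ 1`. -/
theorem ab_integral_well_defined
    (t0 T θ μ γ b : ℝ) (htT : t0 < T) (hθ0 : 0 < θ) (hθ1 : θ < 1)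
    (hμ0 : 0 < μ) (hμ1 : μ < 1) (hγ : 0 < γ) (hb : 0 < b)
    (η : ℝ → ℝ) (hη : ContinuousOn η (Set.Icc t0 T)) :
    (∀ t ∈ Set.Icc t0 T, Summable (fun i : ℕ =>
      genBinom γ i * θ ^ i /
          (b * (1 - θ) ^ ((i : ℝ) - 1) * Real.Gamma ((i : ℝ) * θ + 1 - μ)) *
        ∫ s in t0..t, (t - s) ^ ((i : ℝ) * θ - μ) * η s)) ∧
    ContinuousOn (fun t => ABIntegral t0 b θ μ γ η t) (Set.Icc t0 T) ∧
    ABIntegral t0 b θ μ γ η t0 = 0 ∧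
    (∀ (f : ℝ → ℝ → ℝ) (x : ℝ → ℝ) (x0 : ℝ), ContinuousOn x (Set.Icc t0 T) →
      (∀ t ∈ Set.Icc t0 T, x t = x0 + ABIntegral t0 b θ μ γ (fun s => f s (x s)) t) →
      x t0 = x0) := by
  have htT' : t0 ≤ T := htT.le
  have h1θ : 0 < 1 - θ := by linarith
  have hT0 : (0:ℝ) < T - t0 := by linarith
  -- continuous bounded extension of η
  set cl : ℝ → ℝ := fun s => max t0 (min T s) with hcl
  have hclcont : Continuous cl := continuous_const.max (continuous_const.min continuous_id)
  have hclmem : ∀ s, cl s ∈ Set.Icc t0 T := fun s =>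
    ⟨le_max_left _ _, max_le htT' (min_le_left _ _)⟩
  set g : ℝ → ℝ := fun s => η (cl s) with hgdef
  have hgc : Continuous g := hη.comp_continuous hclcont hclmem
  have hgeq : ∀ s ∈ Set.Icc t0 T, g s = η s := by
    intro s hs
    simp only [hgdef, hcl]
    rw [min_eq_right hs.2, max_eq_right hs.1]
  obtain ⟨M0, hM0⟩ := (isCompact_Icc (a := t0) (b := T)).exists_bound_of_continuousOn hη
  set M : ℝ := max M0 0 with hMdef
  have hMnn : (0:ℝ) ≤ M := le_max_right _ _
  have hM : ∀ s, |g s| ≤ M := by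
    intro s
    calc |g s| = ‖η (cl s)‖ := by rw [Real.norm_eq_abs]
      _ ≤ M0 := hM0 _ (hclmem s)
      _ ≤ M := le_max_left _ _
  -- exponents and coefficients
  have hα1 : ∀ i : ℕ, -1 < (i:ℝ) * θ - μ := by
    intro i
    have : (0:ℝ) ≤ (i:ℝ) * θ := by positivity
    linarith
  have hαpos : ∀ i : ℕ, (0:ℝ) < (i:ℝ) * θ + 1 - μ := by
    intro i
    have : (0:ℝ) ≤ (i:ℝ) * θ := by positivity
    linarith
  have hgampos : ∀ i : ℕ, 0 < Real.Gamma ((i:ℝ) * θ + 1 - μ) :=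
    fun i => Real.Gamma_pos_of_pos (hαpos i)
  set co : ℕ → ℝ := fun i => genBinom γ i * θ ^ i /
    (b * (1 - θ) ^ ((i : ℝ) - 1) * Real.Gamma ((i:ℝ) * θ + 1 - μ)) with hco
  set F : ℕ → ℝ → ℝ := fun i t =>
    co i * ∫ s in t0..t, (t - s) ^ ((i:ℝ) * θ - μ) * g s with hF
  set r : ℝ := (1 + γ) * θ * (T - t0) ^ θ / (1 - θ) with hr
  have hrnn : 0 ≤ r := by positivity
  set u : ℕ → ℝ := fun i => ((1 - θ) * (T - t0) ^ (1 - μ) * M / b) *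
    (r ^ i / Real.Gamma ((i:ℝ) * θ + (2 - μ))) with hu
  have husum : Summable u :=
    (summable_pow_div_gamma r θ (2 - μ) hrnn hθ0 (by linarith) (by linarith)).mul_left _
  -- the key bound
  have hbound : ∀ i : ℕ, ∀ t ∈ Set.Icc t0 T, ‖F i t‖ ≤ u i := by
    intro i t ht
    have hdenpos : 0 < b * (1 - θ) ^ ((i : ℝ) - 1) * Real.Gamma ((i:ℝ) * θ + 1 - μ) := by
      have := hgampos i
      positivity
    have h2 : |co i| ≤ (1 + γ) ^ i * θ ^ i /
        (b * (1 - θ) ^ ((i : ℝ) - 1) * Real.Gamma ((i:ℝ) * θ + 1 - μ)) := by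
      rw [hco]
      simp only []
      rw [abs_div, abs_of_pos hdenpos, abs_mul, abs_pow, abs_of_pos hθ0]
      gcongr
      exact genBinom_le γ hγ i
    have h3 : |∫ s in t0..t, (t - s) ^ ((i:ℝ) * θ - μ) * g s| ≤
        M * (T - t0) ^ (((i:ℝ) * θ - μ) + 1) / (((i:ℝ) * θ - μ) + 1) :=
      integral_bound t0 T (hα1 i) g hgc hM ht
    have h4 : ‖F i t‖ = |co i| * |∫ s in t0..t, (t - s) ^ ((i:ℝ) * θ - μ) * g s| := by
      rw [hF]
      simp only []
      rw [Real.norm_eq_abs, abs_mul]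
    rw [h4]
    calc |co i| * |∫ s in t0..t, (t - s) ^ ((i:ℝ) * θ - μ) * g s|
        ≤ ((1 + γ) ^ i * θ ^ i /
            (b * (1 - θ) ^ ((i : ℝ) - 1) * Real.Gamma ((i:ℝ) * θ + 1 - μ))) *
          (M * (T - t0) ^ (((i:ℝ) * θ - μ) + 1) / (((i:ℝ) * θ - μ) + 1)) := by
          apply mul_le_mul h2 h3 (abs_nonneg _) (by positivity)
      _ = u i := by
          have hGadd : Real.Gamma ((i:ℝ) * θ + (2 - μ)) =
              ((i:ℝ) * θ + 1 - μ) * Real.Gamma ((i:ℝ) * θ + 1 - μ) := by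
            rw [show (i:ℝ) * θ + (2 - μ) = ((i:ℝ) * θ + 1 - μ) + 1 by ring,
              Real.Gamma_add_one (hαpos i).ne']
          have hpow1 : (1 - θ) ^ ((i : ℝ) - 1) = (1 - θ) ^ (i : ℕ) / (1 - θ) := by
            rw [Real.rpow_sub h1θ, Real.rpow_one, Real.rpow_natCast]
          have hpow2 : (T - t0) ^ (((i:ℝ) * θ - μ) + 1) =
              ((T - t0) ^ θ) ^ (i : ℕ) * (T - t0) ^ (1 - μ) := by
            rw [show ((i:ℝ) * θ - μ) + 1 = θ * (i:ℝ) + (1 - μ) by ring,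
              Real.rpow_add hT0, Real.rpow_mul hT0.le, Real.rpow_natCast]
          have hrpow : r ^ i = ((1 + γ) ^ i * θ ^ i * ((T - t0) ^ θ) ^ i) / (1 - θ) ^ i := by
            rw [hr, div_pow, mul_pow, mul_pow]
          rw [hu]
          simp only []
          rw [hGadd, hpow1, hpow2, hrpow, show ((i:ℝ) * θ - μ) + 1 = (i:ℝ) * θ + 1 - μ by ring]
          have hb' : b ≠ 0 := hb.ne'
          have h1θ' : (1 - θ : ℝ) ≠ 0 := h1θ.ne'
          have h1θi : ((1 - θ : ℝ)) ^ (i : ℕ) ≠ 0 := pow_ne_zero _ h1θ'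
          have hga' : Real.Gamma ((i:ℝ) * θ + 1 - μ) ≠ 0 := (hgampos i).ne'
          have hs' : ((i:ℝ) * θ + 1 - μ) ≠ 0 := (hαpos i).ne'
          field_simp
  -- continuity of the tsum of F
  have hFcont : ∀ i : ℕ, ContinuousOn (F i) (Set.Icc t0 T) := by
    intro i
    exact continuousOn_const.mul (cont_aux t0 T htT' (hα1 i) g hgc hM)
  have hcont_tsum : ContinuousOn (fun t => ∑' i, F i t) (Set.Icc t0 T) :=
    continuousOn_tsum hFcont husum (fun i t ht => hbound i t ht)
  -- termwise identification on Icc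
  have hterm : ∀ t ∈ Set.Icc t0 T, ∀ i : ℕ,
      genBinom γ i * θ ^ i /
          (b * (1 - θ) ^ ((i : ℝ) - 1) * Real.Gamma ((i : ℝ) * θ + 1 - μ)) *
        (∫ s in t0..t, (t - s) ^ ((i : ℝ) * θ - μ) * η s) = F i t := by
    intro t ht i
    rw [hF]
    simp only []
    rw [hco]
    simp only []
    congr 1
    apply intervalIntegral.integral_congr
    intro s hs
    have hs' : s ∈ Set.Icc t0 T := by
      rw [Set.uIcc_of_le ht.1] at hs
      exact ⟨hs.1, le_trans hs.2 ht.2⟩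
    show (t - s) ^ ((i:ℝ) * θ - μ) * η s = (t - s) ^ ((i:ℝ) * θ - μ) * g s
    rw [hgeq s hs']
  refine ⟨?_, ?_, ?_, ?_⟩
  · -- summability
    intro t ht
    apply Summable.of_norm_bounded husum
    intro i
    rw [hterm t ht i]
    exact hbound i t ht
  · -- continuity
    apply hcont_tsum.congr
    intro t ht
    unfold ABIntegral
    exact tsum_congr (fun i => hterm t ht i)
  · -- value at t0
    simp [ABIntegral, intervalIntegral.integral_same]
  · -- initial condition
    intro f x x0 hx hsol
    have h := hsol t0 ⟨le_refl t0, htT'⟩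
    have h0 : ABIntegral t0 b θ μ γ (fun s => f s (x s)) t0 = 0 := by
      simp [ABIntegral, intervalIntegral.integral_same]
    rw [h0, add_zero] at h
    exact h
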